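/- Dhar's formula: Let H = (U ∪ {s}, F) be a finite connected multigraph without loop-edges with sink s, and let ν_H be the uniform distribution on the set R_H of recurrent sandpiles. Then for all x, y ∈ U, the expectation under ν_H of n(x,y;η) equals g_H(x,y), where g_H = (Δ_H)^{−1} and Δ_H is the Dirichlet Laplacian of H, given by Δ_H(x,x) = deg_H(x) and Δ_H(x,y) = −a_{xy} for x ≠ y in U, with a_{xy} the number of edges joining x and y (Δ_H is invertible since H is connected). -/

import Mathlib

/-!
Dhar's formula: for the uniform measure `ν_H` on recurrent sandpiles of a finite connected
multigraph `H` with sink `s`, the expected number of topplings of `y` upon adding one grain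
at `x` equals `g_H(x,y)`, the `(x,y)` entry of the inverse of the Dirichlet Laplacian.
-/

/-- A finite connected multigraph without loop-edges, with a distinguished sink vertex.
`mult x y` is the number of edges joining `x` and `y`. -/
structure SandpileGraph (V : Type*) [Fintype V] [DecidableEq V] where
  sink : V
  mult : V → V → ℕ
  symm : ∀ x y, mult x y = mult y x
  loopless : ∀ x, mult x x = 0
  conn : ∀ x : V, Relation.ReflTransGen (fun a b => 0 < mult a b) x sink

namespace SandpileGraph

variable {V : Type*} [Fintype V] [DecidableEq V]

/-- The degree of a vertex. -/
def deg (H : SandpileGraph V) (x : V) : ℕ := ∑ y, H.mult x y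

/-- Toppling of the vertex `x`: `x` sends one grain along each incident edge;
grains reaching the sink are lost. -/
def topple (H : SandpileGraph V) (x : V) (η : V → ℕ) : V → ℕ :=
  fun y => if y = x then η y - H.deg x else if y = H.sink then η y else η y + H.mult x y

/-- Legality of a finite sequence of topplings. -/
def LegalSeq (H : SandpileGraph V) : (V → ℕ) → List V → Prop
  | _, [] => True
  | η, x :: l => x ≠ H.sink ∧ H.deg x ≤ η x ∧ H.LegalSeq (H.topple x η) l

/-- The result of performing a sequence of topplings. -/
def toppleList (H : SandpileGraph V) : (V → ℕ) → List V → (V → ℕ)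
  | η, [] => η
  | η, x :: l => H.toppleList (H.topple x η) l

/-- A configuration is stable if every non-sink vertex has fewer grains than its degree. -/
def Stable (H : SandpileGraph V) (η : V → ℕ) : Prop :=
  ∀ x, x ≠ H.sink → η x < H.deg x

/-- Addition of one grain at `x`. -/
def addGrain (x : V) (η : V → ℕ) : V → ℕ := Function.update η x (η x + 1)

set_option linter.unusedSectionVars false
variable {H : SandpileGraph V}

@[simp] lemma legalSeq_nil (η : V → ℕ) : H.LegalSeq η [] := trivial

@[simp] lemma legalSeq_cons {η : V → ℕ} {x : V} {l : List V} :
    H.LegalSeq η (x :: l) ↔ x ≠ H.sink ∧ H.deg x ≤ η x ∧ H.LegalSeq (H.topple x η) l :=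
  Iff.rfl

@[simp] lemma toppleList_nil (η : V → ℕ) : H.toppleList η [] = η := rfl

@[simp] lemma toppleList_cons (η : V → ℕ) (x : V) (l : List V) :
    H.toppleList η (x :: l) = H.toppleList (H.topple x η) l := rfl

lemma topple_self (x : V) (η : V → ℕ) : H.topple x η x = η x - H.deg x := by
  simp [topple]

lemma topple_sink {x : V} (hx : x ≠ H.sink) (η : V → ℕ) :
    H.topple x η H.sink = η H.sink := by
  simp [topple, Ne.symm hx]

lemma topple_apply_ne {x v : V} (hvx : v ≠ x) (hvs : v ≠ H.sink) (η : V → ℕ) :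
    H.topple x η v = η v + H.mult x v := by
  simp [topple, hvx, hvs]

lemma le_topple_of_ne {x v : V} (hvx : v ≠ x) (η : V → ℕ) :
    η v ≤ H.topple x η v := by
  by_cases hvs : v = H.sink
  · subst hvs; simp [topple, hvx]
  · rw [topple_apply_ne hvx hvs]; omega

lemma toppleList_append (η : V → ℕ) (l l' : List V) :
    H.toppleList η (l ++ l') = H.toppleList (H.toppleList η l) l' := by
  induction l generalizing η with
  | nil => rfl
  | cons a t ih => simp [ih]

lemma legalSeq_append {η : V → ℕ} {l l' : List V} :
    H.LegalSeq η (l ++ l') ↔ H.LegalSeq η l ∧ H.LegalSeq (H.toppleList η l) l' := by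
  induction l generalizing η with
  | nil => simp
  | cons a t ih => simp [ih, and_assoc]

lemma LegalSeq.not_mem_sink {η : V → ℕ} {l : List V} (h : H.LegalSeq η l) :
    H.sink ∉ l := by
  induction l generalizing η with
  | nil => simp
  | cons a t ih =>
    obtain ⟨ha, -, hl⟩ := h
    simp only [List.mem_cons, not_or]
    exact ⟨fun hs => ha hs.symm, ih hl⟩

lemma toppleList_sink {η : V → ℕ} {l : List V} (h : H.LegalSeq η l) :
    H.toppleList η l H.sink = η H.sink := by
  induction l generalizing η with
  | nil => rfl
  | cons a t ih =>
    obtain ⟨ha, -, hl⟩ := h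
    simp [ih hl, topple_sink ha]

lemma le_toppleList_of_not_mem {η : V → ℕ} {l : List V} (h : H.LegalSeq η l) {v : V}
    (hv : v ∉ l) : η v ≤ H.toppleList η l v := by
  induction l generalizing η with
  | nil => exact le_rfl
  | cons a t ih =>
    obtain ⟨ha, -, hl⟩ := h
    simp only [List.mem_cons, not_or] at hv
    calc η v ≤ H.topple a η v := le_topple_of_ne (fun h => hv.1 h) η
    _ ≤ _ := ih hl hv.2


lemma topple_comm {x z : V} (hxz : x ≠ z) (hxs : x ≠ H.sink) (hzs : z ≠ H.sink)
    {η : V → ℕ} (hx : H.deg x ≤ η x) (hz : H.deg z ≤ η z) :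
    H.topple z (H.topple x η) = H.topple x (H.topple z η) := by
  funext v
  rcases eq_or_ne v x with rfl | hvx
  · rw [topple_apply_ne hxz hxs, topple_self, topple_self,
      topple_apply_ne hxz hxs]
    omega
  rcases eq_or_ne v z with rfl | hvz
  · rw [topple_self, topple_apply_ne (Ne.symm hxz) hzs,
      topple_apply_ne (Ne.symm hxz) hzs, topple_self]
    omega
  rcases eq_or_ne v H.sink with rfl | hvs
  · rw [topple_sink hzs, topple_sink hxs, topple_sink hxs, topple_sink hzs]
  · rw [topple_apply_ne hvz hvs, topple_apply_ne hvx hvs,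
      topple_apply_ne hvx hvs, topple_apply_ne hvz hvs]
    omega

/-- If `x` is toppleable and does not occur in the legal sequence `a`, then toppling `x`
first still allows `a`, with the same combined result. -/
lemma topple_first {x : V} (hxs : x ≠ H.sink) :
    ∀ (a : List V) (η : V → ℕ), x ∉ a → H.deg x ≤ η x → H.LegalSeq η a →
      H.LegalSeq (H.topple x η) a ∧
        H.toppleList (H.topple x η) a = H.topple x (H.toppleList η a) := by
  intro a
  induction a with
  | nil => intro η _ _ _; exact ⟨trivial, rfl⟩
  | cons z t ih =>
    intro η hxa hx hleg
    obtain ⟨hzs, hz, hleg'⟩ := hleg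
    simp only [List.mem_cons, not_or] at hxa
    have hxz : x ≠ z := hxa.1
    have hx' : H.deg x ≤ H.topple z η x := le_trans hx (le_topple_of_ne hxz η)
    have comm := topple_comm hxz hxs hzs hx hz
    obtain ⟨ihleg, iheq⟩ := ih (H.topple z η) hxa.2 hx' hleg'
    constructor
    · refine ⟨hzs, le_trans hz (le_topple_of_ne (Ne.symm hxz) η), ?_⟩
      rw [comm]; exact ihleg
    · simp only [toppleList_cons, comm]
      exact iheq

lemma exists_first_occ {x : V} {l : List V} (h : x ∈ l) :
    ∃ a b : List V, l = a ++ x :: b ∧ x ∉ a := by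
  induction l with
  | nil => simp at h
  | cons z t ih =>
    rcases eq_or_ne z x with rfl | hzx
    · exact ⟨[], t, rfl, by simp⟩
    · have hxt : x ∈ t := by
        rcases List.mem_cons.mp h with h' | h'
        · exact absurd h'.symm hzx
        · exact h'
      obtain ⟨a, b, rfl, hxa⟩ := ih hxt
      exact ⟨z :: a, b, rfl, by simp [hxa, Ne.symm hzx]⟩

/-- Uniqueness of the stable result of legal toppling sequences. -/
lemma stabilize_unique :
    ∀ (n : ℕ) (l l' : List V) (η : V → ℕ), l.length = n →
      H.LegalSeq η l → H.LegalSeq η l' →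
      H.Stable (H.toppleList η l) → H.Stable (H.toppleList η l') →
      H.toppleList η l = H.toppleList η l' := by
  intro n
  induction n with
  | zero =>
    intro l l' η hlen hl hl' hs hs'
    rw [List.length_eq_zero_iff] at hlen; subst hlen
    cases l' with
    | nil => rfl
    | cons z t =>
      obtain ⟨hzs, hz, -⟩ := hl'
      have := hs z hzs
      simp only [toppleList_nil] at this
      omega
  | succ n ih =>
    intro l l' η hlen hl hl' hs hs'
    cases l with
    | nil => simp at hlen
    | cons z t =>
      obtain ⟨hzs, hz, hlt⟩ := hl
      have hzl' : z ∈ l' := by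
        by_contra hmem
        have := le_toppleList_of_not_mem hl' hmem
        exact absurd (hs' z hzs) (by omega)
      obtain ⟨a, b, rfl, hza⟩ := exists_first_occ hzl'
      rw [legalSeq_append] at hl'
      obtain ⟨hla, hlzb⟩ := hl'
      obtain ⟨-, hdz, hlb⟩ := hlzb
      obtain ⟨hlega, heqa⟩ := topple_first hzs a η hza hz hla
      -- l' result equals result of z :: (a ++ b)
      have hlegab : H.LegalSeq (H.topple z η) (a ++ b) := by
        rw [legalSeq_append]
        refine ⟨hlega, ?_⟩
        rw [heqa]; exact hlb
      have heq' : H.toppleList (H.topple z η) (a ++ b) = H.toppleList η (a ++ z :: b) := by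
        rw [toppleList_append, heqa, toppleList_append]
        rfl
      have hlen' : t.length = n := by simpa using hlen
      have := ih t (a ++ b) (H.topple z η) hlen' hlt hlegab hs (by rw [heq']; exact hs')
      simpa [heq'] using this

lemma topple_add {x : V} (η c : V → ℕ) (hx : H.deg x ≤ η x) :
    H.topple x (η + c) = H.topple x η + c := by
  funext v
  rcases eq_or_ne v x with rfl | hvx
  · simp only [topple_self, Pi.add_apply, topple_self]; omega
  rcases eq_or_ne v H.sink with rfl | hvs
  · by_cases hxs : x = H.sink
    · exact absurd hxs.symm hvx
    · simp [topple_sink hxs, Pi.add_apply, topple_sink hxs]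
  · rw [Pi.add_apply, topple_apply_ne hvx hvs, Pi.add_apply, topple_apply_ne hvx hvs]
    omega

lemma legalSeq_add {η : V → ℕ} {l : List V} (h : H.LegalSeq η l) (c : V → ℕ) :
    H.LegalSeq (η + c) l ∧ H.toppleList (η + c) l = H.toppleList η l + c := by
  induction l generalizing η with
  | nil => exact ⟨trivial, rfl⟩
  | cons z t ih =>
    obtain ⟨hzs, hz, hl⟩ := h
    have hz' : H.deg z ≤ (η + c) z := le_trans hz (by simp)
    have := topple_add η c hz
    obtain ⟨ih1, ih2⟩ := ih hl
    refine ⟨⟨hzs, hz', ?_⟩, ?_⟩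
    · rw [this]; exact ih1
    · simp only [toppleList_cons, this]; exact ih2

/-- The key linear identity: the result of a legal toppling sequence, at a non-sink
vertex, in terms of toppling counts. -/
lemma toppleList_count {η : V → ℕ} {l : List V} (h : H.LegalSeq η l) {v : V}
    (hv : v ≠ H.sink) :
    (H.toppleList η l v : ℤ) =
      (η v : ℤ) + ∑ z, (l.count z : ℤ) * H.mult z v - (l.count v : ℤ) * H.deg v := by
  induction l generalizing η with
  | nil => simp
  | cons w t ih =>
    obtain ⟨hws, hw, hl⟩ := h
    have key := ih hl
    have hcnt : ∀ z, ((w :: t).count z : ℤ) = (t.count z : ℤ) + if w = z then 1 else 0 := by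
      intro z
      rcases eq_or_ne w z with rfl | hwz
      · simp [List.count_cons]
      · simp [List.count_cons, hwz]
    have hsum : ∑ z, ((w :: t).count z : ℤ) * H.mult z v
        = (∑ z, (t.count z : ℤ) * H.mult z v) + H.mult w v := by
      have hterm : ∀ z, ((w :: t).count z : ℤ) * H.mult z v
          = (t.count z : ℤ) * H.mult z v + (if w = z then (H.mult z v : ℤ) else 0) := by
        intro z
        rw [hcnt z]
        rcases eq_or_ne w z with rfl | hwz
        · simp [add_mul]
        · simp [hwz]
      rw [Finset.sum_congr rfl fun z _ => hterm z, Finset.sum_add_distrib]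
      congr 1
      rw [Finset.sum_ite_eq Finset.univ w (fun z => (H.mult z v : ℤ))]
      simp
    rcases eq_or_ne v w with rfl | hvw
    · have hval : (H.topple v η v : ℤ) = (η v : ℤ) - H.deg v := by
        rw [topple_self]; omega
      rw [toppleList_cons, key, hval, hsum, hcnt]
      simp only [if_pos rfl, H.loopless, Nat.cast_zero, if_true]
      ring
    · have hval : (H.topple w η v : ℤ) = (η v : ℤ) + H.mult w v := by
        rw [topple_apply_ne hvw hv]; push_cast; ring
      rw [toppleList_cons, key, hval, hsum, hcnt]
      simp only [if_neg (Ne.symm hvw)]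
      ring

lemma count_sink_eq_zero {η : V → ℕ} {l : List V} (h : H.LegalSeq η l) :
    l.count H.sink = 0 :=
  List.count_eq_zero.mpr h.not_mem_sink

/-- Mass identity: total mass decreases by the grains sent to the sink. -/
lemma mass_toppleList {η : V → ℕ} {l : List V} (h : H.LegalSeq η l) :
    (∑ v, (H.toppleList η l v : ℤ)) =
      (∑ v, (η v : ℤ)) - ∑ z, (l.count z : ℤ) * H.mult z H.sink := by
  have hsplit : ∀ (f : V → ℤ), ∑ v, f v = f H.sink + ∑ v ∈ Finset.univ.erase H.sink, f v :=
    fun f => (Finset.add_sum_erase _ f (Finset.mem_univ _)).symm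
  rw [hsplit fun v => (H.toppleList η l v : ℤ), hsplit fun v => (η v : ℤ),
    toppleList_sink h]
  have hstep : ∑ v ∈ Finset.univ.erase H.sink, (H.toppleList η l v : ℤ)
      = ∑ v ∈ Finset.univ.erase H.sink,
        ((η v : ℤ) + ∑ z, (l.count z : ℤ) * H.mult z v - (l.count v : ℤ) * H.deg v) := by
    refine Finset.sum_congr rfl fun v hv => ?_
    exact toppleList_count h (Finset.ne_of_mem_erase hv)
  rw [hstep]
  rw [Finset.sum_sub_distrib, Finset.sum_add_distrib]
  have e1 : ∑ v ∈ Finset.univ.erase H.sink, (∑ z, (l.count z : ℤ) * H.mult z v)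
      = ∑ z, (l.count z : ℤ) * ((H.deg z : ℤ) - H.mult z H.sink) := by
    rw [Finset.sum_comm]
    refine Finset.sum_congr rfl fun z _ => ?_
    rw [← Finset.mul_sum]
    congr 1
    have : (H.deg z : ℤ) = ∑ v, (H.mult z v : ℤ) := by
      simp [deg]
    rw [this, hsplit fun v => (H.mult z v : ℤ)]
    ring
  have e2 : ∑ v ∈ Finset.univ.erase H.sink, (l.count v : ℤ) * H.deg v
      = ∑ v, (l.count v : ℤ) * H.deg v := by
    rw [hsplit fun v => (l.count v : ℤ) * H.deg v, count_sink_eq_zero h]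
    simp
  rw [e1, e2]
  have e3 : ∑ z, (l.count z : ℤ) * ((H.deg z : ℤ) - H.mult z H.sink)
      = (∑ z, (l.count z : ℤ) * H.deg z) - ∑ z, (l.count z : ℤ) * H.mult z H.sink := by
    rw [← Finset.sum_sub_distrib]
    exact Finset.sum_congr rfl fun z _ => by ring
  rw [e3]
  ring

lemma inflow_sink_le {η : V → ℕ} {l : List V} (h : H.LegalSeq η l) :
    ∑ z, (l.count z : ℤ) * H.mult z H.sink ≤ ∑ v, (η v : ℤ) := by
  have hm := mass_toppleList h
  have h0 : (0:ℤ) ≤ ∑ v, (H.toppleList η l v : ℤ) :=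
    Finset.sum_nonneg fun v _ => by positivity
  linarith

lemma inflow_le {η : V → ℕ} {l : List V} (h : H.LegalSeq η l) {w : V} (hw : w ≠ H.sink) :
    ∑ z, (l.count z : ℤ) * H.mult z w ≤
      (∑ v, (η v : ℤ)) + (l.count w : ℤ) * H.deg w := by
  have hc := toppleList_count h hw
  have h1 : (H.toppleList η l w : ℤ) ≤ ∑ v, (H.toppleList η l v : ℤ) :=
    Finset.single_le_sum (f := fun v => (H.toppleList η l v : ℤ))
      (fun v _ => Int.natCast_nonneg _) (Finset.mem_univ w)
  have h2 := mass_toppleList h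
  have h3 : (0:ℤ) ≤ ∑ z, (l.count z : ℤ) * H.mult z H.sink :=
    Finset.sum_nonneg fun z _ => by positivity
  have h4 : (0:ℤ) ≤ (η w : ℤ) := by positivity
  linarith

lemma count_bounded (η : V → ℕ) (v : V) :
    ∃ K : ℕ, ∀ l, H.LegalSeq η l → l.count v ≤ K := by
  have hconn := H.conn v
  induction hconn using Relation.ReflTransGen.head_induction_on with
  | refl =>
    exact ⟨0, fun l hl => le_of_eq (List.count_eq_zero.mpr hl.not_mem_sink)⟩
  | head hac _ ih =>
    rename_i a c _
    obtain ⟨Kc, hKc⟩ := ih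
    refine ⟨(∑ w, η w) + H.deg c * Kc, fun l hl => ?_⟩
    have key : (l.count a : ℤ) ≤ ∑ z, (l.count z : ℤ) * H.mult z c := by
      calc (l.count a : ℤ) ≤ (l.count a : ℤ) * H.mult a c := by
            have h1 : (1:ℤ) ≤ H.mult a c := by exact_mod_cast hac
            nlinarith [Int.natCast_nonneg (l.count a)]
      _ ≤ _ := Finset.single_le_sum (f := fun z => (l.count z : ℤ) * H.mult z c)
            (fun z _ => mul_nonneg (Int.natCast_nonneg _) (Int.natCast_nonneg _))
            (Finset.mem_univ a)
    have hNcast : (∑ w, (η w : ℤ)) = ((∑ w, η w : ℕ) : ℤ) := by push_cast; rfl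
    rcases eq_or_ne c H.sink with rfl | hcs
    · have h2 := inflow_sink_le hl
      have : (l.count a : ℤ) ≤ ((∑ w, η w : ℕ) : ℤ) := by rw [← hNcast]; linarith
      have hn : l.count a ≤ ∑ w, η w := by exact_mod_cast this
      omega
    · have h2 := inflow_le hl hcs
      have h3 : (l.count c : ℤ) ≤ Kc := by exact_mod_cast hKc l hl
      have hdeg : (0:ℤ) ≤ H.deg c := Int.natCast_nonneg _
      have : (l.count a : ℤ) ≤ ((∑ w, η w : ℕ) : ℤ) + (H.deg c : ℤ) * Kc := by
        rw [← hNcast]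
        nlinarith
      have hfin : (l.count a : ℤ) ≤ (((∑ w, η w) + H.deg c * Kc : ℕ) : ℤ) := by
        push_cast
        linarith
      exact_mod_cast hfin

lemma length_eq_sum_count (l : List V) : l.length = ∑ v, l.count v := by
  induction l with
  | nil => simp
  | cons a t ih =>
    have : ∀ v, (a :: t).count v = t.count v + if a = v then 1 else 0 := by
      intro v
      rcases eq_or_ne a v with rfl | hav
      · simp [List.count_cons]
      · simp [List.count_cons, hav]
    rw [Finset.sum_congr rfl fun v _ => this v, Finset.sum_add_distrib]
    simp [ih]

lemma length_bounded (η : V → ℕ) :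
    ∃ B : ℕ, ∀ l, H.LegalSeq η l → l.length ≤ B := by
  choose K hK using fun v => count_bounded (H := H) η v
  refine ⟨∑ v, K v, fun l hl => ?_⟩
  rw [length_eq_sum_count]
  exact Finset.sum_le_sum fun v _ => hK v l hl

lemma exists_stabilization (ξ : V → ℕ) :
    ∃ l, H.LegalSeq ξ l ∧ H.Stable (H.toppleList ξ l) := by
  obtain ⟨B, hB⟩ := length_bounded (H := H) ξ
  suffices h : ∀ k (l : List V), H.LegalSeq ξ l → B + 1 ≤ l.length + k →
      ∃ l', H.LegalSeq ξ l' ∧ H.Stable (H.toppleList ξ l') by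
    exact h (B + 1) [] trivial (by simp)
  intro k
  induction k with
  | zero =>
    intro l hl hlen
    have := hB l hl
    omega
  | succ k ih =>
    intro l hl hlen
    by_cases hs : H.Stable (H.toppleList ξ l)
    · exact ⟨l, hl, hs⟩
    · unfold Stable at hs
      push_neg at hs
      obtain ⟨z, hzs, hz⟩ := hs
      refine ih (l ++ [z]) ?_ ?_
      · rw [legalSeq_append]
        exact ⟨hl, hzs, hz, trivial⟩
      · simp only [List.length_append, List.length_singleton]
        omega

/-- Recurrent configurations of the sandpile Markov chain: stable configurations (vanishing
at the sink) reachable from any configuration by adding grains at non-sink vertices and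
stabilizing. -/
def Recurrent (H : SandpileGraph V) (η : V → ℕ) : Prop :=
  η H.sink = 0 ∧ H.Stable η ∧
    ∀ ξ : V → ℕ, ξ H.sink = 0 →
      ∃ m : V → ℕ, m H.sink = 0 ∧
        ∃ l : List V, H.LegalSeq (ξ + m) l ∧ H.toppleList (ξ + m) l = η ∧
          H.Stable (H.toppleList (ξ + m) l)

/-- The Dirichlet Laplacian matrix of `H` (indexed by non-sink vertices), over `ℚ`:
`Δ_H(x,x) = deg_H(x)` and `Δ_H(x,y) = -a_{xy}` for `x ≠ y`. -/
noncomputable def lap (H : SandpileGraph V) :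
    Matrix {v : V // v ≠ H.sink} {v : V // v ≠ H.sink} ℚ :=
  Matrix.of fun a b => if (a : V) = (b : V) then (H.deg a : ℚ) else -(H.mult a b : ℚ)

/-- The Green function `g_H = (Δ_H)⁻¹`. -/
noncomputable def lapInv (H : SandpileGraph V) :
    Matrix {v : V // v ≠ H.sink} {v : V // v ≠ H.sink} ℚ :=
  (H.lap)⁻¹

open Matrix

lemma recurrent_closed {η : V → ℕ} (hη : H.Recurrent η) {m : V → ℕ} (hm : m H.sink = 0)
    {l : List V} (hl : H.LegalSeq (η + m) l) (hstab : H.Stable (H.toppleList (η + m) l)) :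
    H.Recurrent (H.toppleList (η + m) l) := by
  obtain ⟨hsink, _, hreach⟩ := hη
  refine ⟨?_, hstab, ?_⟩
  · rw [toppleList_sink hl]
    simp [hsink, hm]
  · intro ξ hξ
    obtain ⟨m', hm', l', hleg', hres', -⟩ := hreach ξ hξ
    obtain ⟨h1, h2⟩ := legalSeq_add hleg' m
    have heq : ξ + (m' + m) = (ξ + m') + m := (add_assoc _ _ _).symm
    refine ⟨m' + m, by simp [hm', hm], l' ++ l, ?_, ?_, ?_⟩
    · rw [heq, legalSeq_append]
      exact ⟨h1, by rw [h2, hres']; exact hl⟩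
    · rw [heq, toppleList_append, h2, hres']
    · rw [heq, toppleList_append, h2, hres']
      exact hstab

lemma sum_ne_sink (g : V → ℚ) (hg : g H.sink = 0) :
    ∑ z, g z = ∑ b : {v : V // v ≠ H.sink}, g ↑b := by
  have h1 := Finset.sum_subtype (p := fun v => v ≠ H.sink) (F := inferInstance)
    (Finset.univ.erase H.sink) (fun x => by simp [Finset.mem_erase]) g
  rw [← h1, ← Finset.add_sum_erase _ g (Finset.mem_univ H.sink), hg, zero_add]

lemma lap_mulVec (u : {v : V // v ≠ H.sink} → ℚ) (a : {v : V // v ≠ H.sink}) :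
    (H.lap *ᵥ u) a = (H.deg a : ℚ) * u a
      - ∑ b : {v : V // v ≠ H.sink}, (H.mult a b : ℚ) * u b := by
  classical
  simp only [Matrix.mulVec, dotProduct, lap, Matrix.of_apply]
  have hterm : ∀ b : {v : V // v ≠ H.sink},
      (if (a : V) = (b : V) then (H.deg a : ℚ) else -(H.mult a b : ℚ)) * u b
      = (if a = b then ((H.deg (a:V) : ℚ) + (H.mult (a:V) (b:V) : ℚ)) * u b else 0)
        - (H.mult (a:V) (b:V) : ℚ) * u b := by
    intro b
    rcases eq_or_ne a b with rfl | hab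
    · simp only [if_pos rfl, eq_self_iff_true, if_true]
      ring
    · have hab' : (a : V) ≠ (b : V) := fun h => hab (Subtype.ext h)
      simp only [if_neg hab', if_neg hab]
      ring
  rw [Finset.sum_congr rfl fun b _ => hterm b, Finset.sum_sub_distrib,
    Finset.sum_ite_eq Finset.univ a]
  simp [H.loopless]

lemma lap_det_ne_zero : H.lap.det ≠ 0 := by
  classical
  have hne : Nonempty V := ⟨H.sink⟩
  intro hdet
  obtain ⟨u, hu0, huv⟩ := Matrix.exists_mulVec_eq_zero_iff.mpr hdet
  set U : V → ℚ := fun v => if h : v = H.sink then 0 else u ⟨v, h⟩ with hUdef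
  have hUsink : U H.sink = 0 := by simp [hUdef]
  have hUa : ∀ (a : V) (h : a ≠ H.sink), U a = u ⟨a, h⟩ := fun a h => by simp [hUdef, h]
  have hEq : ∀ a : V, a ≠ H.sink → (H.deg a : ℚ) * U a = ∑ z, (H.mult a z : ℚ) * U z := by
    intro a ha
    have h0 : (H.lap *ᵥ u) ⟨a, ha⟩ = 0 := by rw [huv]; rfl
    rw [lap_mulVec] at h0
    have hsum : ∑ z, (H.mult a z : ℚ) * U z
        = ∑ b : {v : V // v ≠ H.sink}, (H.mult a (b : V) : ℚ) * u b := by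
      rw [sum_ne_sink (H := H) (fun z => (H.mult a z : ℚ) * U z) (by simp [hUsink])]
      exact Finset.sum_congr rfl fun b _ => by rw [hUa _ b.2]
    rw [hsum, hUa a ha]
    linarith
  have main : ∀ w : V → ℚ, w H.sink = 0 →
      (∀ a, a ≠ H.sink → (H.deg a : ℚ) * w a = ∑ z, (H.mult a z : ℚ) * w z) →
      ∀ v, w v ≤ 0 := by
    intro w hws heq v
    by_contra hv
    push_neg at hv
    set M := Finset.univ.sup' Finset.univ_nonempty w with hMdef
    have hM : 0 < M := lt_of_lt_of_le hv (Finset.le_sup' w (Finset.mem_univ v))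
    have hind : ∀ a, Relation.ReflTransGen (fun a b => 0 < H.mult a b) a H.sink →
        w a = M → False := by
      intro a hreach
      induction hreach using Relation.ReflTransGen.head_induction_on with
      | refl =>
        intro h
        rw [hws] at h
        linarith
      | head hac hcb ih =>
        rename_i a' c
        intro haM
        rcases eq_or_ne a' H.sink with rfl | has
        · rw [hws] at haM; linarith
        have he := heq a' has
        rw [haM] at he
        have hle : ∀ z ∈ Finset.univ, (H.mult a' z : ℚ) * w z ≤ (H.mult a' z : ℚ) * M :=
          fun z _ => mul_le_mul_of_nonneg_left (Finset.le_sup' w (Finset.mem_univ z))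
            (by positivity)
        have hsumM : ∑ z, (H.mult a' z : ℚ) * M = (H.deg a' : ℚ) * M := by
          rw [← Finset.sum_mul]
          congr 1
          rw [deg]
          push_cast
          rfl
        have heach := (Finset.sum_eq_sum_iff_of_le hle).mp (by rw [hsumM, ← he])
        have hc := heach c (Finset.mem_univ c)
        have hmac : (0:ℚ) < (H.mult a' c : ℚ) := by exact_mod_cast hac
        exact ih (mul_left_cancel₀ (ne_of_gt hmac) hc)
    obtain ⟨a, -, ha⟩ := Finset.exists_mem_eq_sup' Finset.univ_nonempty w
    exact hind a (H.conn a) ha.symm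
  have h1 := main U hUsink hEq
  have h2 : ∀ v, -U v ≤ 0 := by
    refine main (fun v => -U v) (by simp [hUsink]) ?_
    intro a ha
    have := hEq a ha
    have hsum : ∑ z, (H.mult a z : ℚ) * (fun v => -U v) z
        = - ∑ z, (H.mult a z : ℚ) * U z := by
      rw [← Finset.sum_neg_distrib]
      exact Finset.sum_congr rfl fun z _ => by ring
    rw [hsum, ← this]
    ring
  apply hu0
  funext b
  have hb1 := h1 b
  have hb2 := h2 b
  have : U b = 0 := by linarith
  rw [hUa _ b.2] at this
  rw [Subtype.coe_eta] at this
  simpa using this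

lemma lap_symm : (H.lap)ᵀ = H.lap := by
  ext a b
  simp only [Matrix.transpose_apply, lap, Matrix.of_apply]
  rcases eq_or_ne (a : V) (b : V) with h | h
  · have hba : (b : V) = (a : V) := h.symm
    rw [if_pos h, if_pos hba, Subtype.ext h]
  · rw [if_neg h, if_neg (Ne.symm h), H.symm]

lemma lapInv_symm (a b : {v : V // v ≠ H.sink}) : H.lapInv a b = H.lapInv b a := by
  have h1 : (H.lap⁻¹)ᵀ = (H.lapᵀ)⁻¹ := Matrix.transpose_nonsing_inv _
  rw [lap_symm] at h1
  have h2 := congrFun (congrFun h1 a) b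
  simp only [Matrix.transpose_apply] at h2
  simpa [lapInv] using h2.symm

end SandpileGraph

open Matrix

open SandpileGraph in
/-- **Dhar's formula.**  If `nfun η` is the number of times `y` topples during the
stabilization of `η + 1_x` (characterized by the hypothesis `hn` via any legal stabilizing
toppling sequence), then the average of `nfun` over the set of recurrent configurations
equals `g_H(x,y)`; equivalently, the sum over recurrent configurations equals
`g_H(x,y) · |R_H|`. -/
theorem dhar_formula {V : Type*} [Fintype V] [DecidableEq V] (H : SandpileGraph V)
    (x y : V) (hx : x ≠ H.sink) (hy : y ≠ H.sink)
    (nfun : (V → ℕ) → ℕ)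
    (hn : ∀ η : V → ℕ, H.Recurrent η →
      ∀ l : List V, H.LegalSeq (addGrain x η) l →
        H.Stable (H.toppleList (addGrain x η) l) → nfun η = l.count y) :
    ∑ᶠ η ∈ {η : V → ℕ | H.Recurrent η}, (nfun η : ℚ) =
      H.lapInv ⟨x, hx⟩ ⟨y, hy⟩ * ({η : V → ℕ | H.Recurrent η}.ncard : ℚ) := by
  classical
  set S := {η : V → ℕ | H.Recurrent η} with hSdef
  have hSfin : S.Finite := by
    apply Set.Finite.subset (Set.finite_Icc (0 : V → ℕ) (fun _ => Finset.univ.sup H.deg))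
    intro η hη
    obtain ⟨hsink, hstable, -⟩ := hη
    constructor
    · intro v
      exact Nat.zero_le _
    · intro v
      rcases eq_or_ne v H.sink with rfl | hv
      · simp [hsink]
      · exact le_trans (le_of_lt (hstable v hv)) (Finset.le_sup (Finset.mem_univ v))
  set Rs := hSfin.toFinset with hRsdef
  choose seq hseqleg hseqstab using fun ξ : V → ℕ => exists_stabilization (H := H) ξ
  set δ : V → ℕ := fun v => if v = x then 1 else 0 with hδdef
  have hδs : δ H.sink = 0 := by simp [hδdef, Ne.symm hx]
  have haddG : ∀ ζ : V → ℕ, addGrain x ζ = ζ + δ := by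
    intro ζ
    funext v
    simp only [addGrain, Function.update_apply, hδdef, Pi.add_apply]
    by_cases h : v = x
    · subst h; simp
    · simp [h]
  set f : (V → ℕ) → (V → ℕ) :=
    fun η => H.toppleList (addGrain x η) (seq (addGrain x η)) with hfdef
  have hfmem : ∀ η ∈ S, f η ∈ S := by
    intro η hη
    have he := haddG η
    have h1 := hseqleg (addGrain x η)
    have h2 := hseqstab (addGrain x η)
    show H.Recurrent (H.toppleList (addGrain x η) (seq (addGrain x η)))
    rw [he] at h1 h2 ⊢
    exact recurrent_closed hη hδs h1 h2
  have hsurj : ∀ η ∈ S, ∃ ξ ∈ S, f ξ = η := by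
    intro η hη
    obtain ⟨hsink, hstable, hreach⟩ := hη
    have hξ0 : (addGrain x η) H.sink = 0 := by
      rw [haddG]
      simp [Pi.add_apply, hsink, hδs]
    obtain ⟨m, hm, l₀, hleg₀, hres₀, hstab₀⟩ := hreach (addGrain x η) hξ0
    set ξ' := H.toppleList (η + m) (seq (η + m)) with hξ'def
    have hξ'S : ξ' ∈ S := recurrent_closed ⟨hsink, hstable, hreach⟩ hm (hseqleg _) (hseqstab _)
    refine ⟨ξ', hξ'S, ?_⟩
    obtain ⟨hleg1, hres1⟩ := legalSeq_add (hseqleg (η + m)) δ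
    have hc : addGrain x η + m = (η + m) + δ := by
      rw [haddG]
      exact add_right_comm η δ m
    set L := seq (η + m) ++ seq (addGrain x ξ') with hLdef
    have hL : H.LegalSeq ((η + m) + δ) L := by
      rw [hLdef, legalSeq_append]
      refine ⟨hleg1, ?_⟩
      rw [hres1, ← haddG ξ']
      exact hseqleg _
    have hLres : H.toppleList ((η + m) + δ) L = f ξ' := by
      rw [hLdef, toppleList_append, hres1, ← haddG ξ']
    have hleg₀' : H.LegalSeq ((η + m) + δ) l₀ := by rw [← hc]; exact hleg₀
    have hres₀' : H.toppleList ((η + m) + δ) l₀ = η := by rw [← hc]; exact hres₀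
    have hkey := stabilize_unique (H := H) l₀.length l₀ L ((η + m) + δ) rfl hleg₀' hL
      (by rw [← hc]; exact hstab₀)
      (by rw [hLres]; exact hseqstab _)
    rw [hres₀', hLres] at hkey
    exact hkey.symm
  haveI : Fintype ↥S := hSfin.fintype
  set cnt : (V → ℕ) → V → ℕ := fun η z => (seq (addGrain x η)).count z with hcntdef
  set u : V → ℚ := fun z => ∑ η ∈ Rs, (cnt η z : ℚ) with hudef
  have hmemRs : ∀ η, η ∈ Rs ↔ η ∈ S := fun η => hSfin.mem_toFinset
  -- reindexing by the bijection f
  have hmem' : ∀ a : ↥S, f ↑a ∈ S := fun a => hfmem ↑a a.2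
  set F : ↥S → ↥S := fun a => ⟨f ↑a, hmem' a⟩ with hFdef
  have hFsurj : Function.Surjective F := by
    intro b
    obtain ⟨ξ, hξ, hfb⟩ := hsurj ↑b b.2
    exact ⟨⟨ξ, hξ⟩, Subtype.ext hfb⟩
  have hFbij := Finite.surjective_iff_bijective.mp hFsurj
  have hsumf : ∀ g : (V → ℕ) → ℚ, ∑ η ∈ Rs, g (f η) = ∑ η ∈ Rs, g η := by
    intro g
    have h1 : ∀ g' : (V → ℕ) → ℚ, ∑ η ∈ Rs, g' η = ∑ a : ↥S, g' ↑a :=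
      fun g' => Finset.sum_subtype Rs hmemRs g'
    rw [h1, h1]
    rw [← Equiv.sum_comp (Equiv.ofBijective F hFbij) (fun a : ↥S => g ↑a)]
    rfl
  -- the per-configuration linear identity
  have hid : ∀ η, ∀ v, v ≠ H.sink → (f η v : ℚ) =
      (η v : ℚ) + (if v = x then 1 else 0)
        + ∑ z, (cnt η z : ℚ) * H.mult z v - (cnt η v : ℚ) * H.deg v := by
    intro η v hv
    have hint := toppleList_count (hseqleg (addGrain x η)) hv
    have key : (f η v : ℚ) = ((addGrain x η) v : ℚ)
        + ∑ z, (cnt η z : ℚ) * H.mult z v - (cnt η v : ℚ) * H.deg v := by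
      exact_mod_cast hint
    rw [key]
    have haG : ((addGrain x η) v : ℚ) = (η v : ℚ) + (if v = x then 1 else 0) := by
      simp only [addGrain, Function.update_apply]
      by_cases h : v = x
      · subst h; simp
      · simp [h]
    rw [haG]
  -- the master equation
  have hmaster : ∀ v, v ≠ H.sink →
      u v * H.deg v - ∑ z, u z * H.mult z v
        = (Rs.card : ℚ) * (if v = x then 1 else 0) := by
    intro v hv
    have h1 : ∑ η ∈ Rs, (f η v : ℚ) = ∑ η ∈ Rs, (η v : ℚ) :=
      hsumf (fun η => (η v : ℚ))
    have h2 : ∑ η ∈ Rs, (f η v : ℚ)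
        = ∑ η ∈ Rs, ((η v : ℚ) + (if v = x then 1 else 0)
            + ∑ z, (cnt η z : ℚ) * H.mult z v - (cnt η v : ℚ) * H.deg v) :=
      Finset.sum_congr rfl fun η _ => hid η v hv
    rw [h2] at h1
    rw [Finset.sum_sub_distrib, Finset.sum_add_distrib, Finset.sum_add_distrib] at h1
    have h3 : ∑ η ∈ Rs, (∑ z, (cnt η z : ℚ) * H.mult z v)
        = ∑ z, u z * H.mult z v := by
      rw [Finset.sum_comm]
      exact Finset.sum_congr rfl fun z _ => by rw [hudef, Finset.sum_mul]
    have h4 : ∑ η ∈ Rs, (cnt η v : ℚ) * H.deg v = u v * H.deg v := by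
      rw [hudef, Finset.sum_mul]
    have h5 : ∑ _η ∈ Rs, (if v = x then (1:ℚ) else 0)
        = (Rs.card : ℚ) * (if v = x then 1 else 0) := by
      rw [Finset.sum_const, nsmul_eq_mul]
    rw [h3, h4, h5] at h1
    linarith
  have hu_sink : u H.sink = 0 := by
    rw [hudef]
    refine Finset.sum_eq_zero fun η _ => ?_
    rw [hcntdef]
    norm_cast
    exact count_sink_eq_zero (hseqleg _)
  set w : {v : V // v ≠ H.sink} → ℚ := fun a => u ↑a with hwdef
  have hvec : H.lap *ᵥ w = fun a : {v : V // v ≠ H.sink} =>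
      (Rs.card : ℚ) * (if (a : V) = x then 1 else 0) := by
    funext a
    rw [lap_mulVec]
    have hm := hmaster ↑a a.2
    have hconv : ∑ z, u z * (H.mult z (a : V) : ℚ)
        = ∑ b : {v : V // v ≠ H.sink}, (H.mult (a : V) (b : V) : ℚ) * w b := by
      rw [sum_ne_sink (H := H) (fun z => u z * (H.mult z (a : V) : ℚ)) (by simp [hu_sink])]
      exact Finset.sum_congr rfl fun b _ => by rw [H.symm]; ring
    rw [← hconv]
    have : w a = u ↑a := rfl
    rw [this]
    linarith
  have hunit : IsUnit H.lap.det := isUnit_iff_ne_zero.mpr (lap_det_ne_zero (H := H))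
  have hw_eq : w = fun a => (Rs.card : ℚ) * H.lapInv a ⟨x, hx⟩ := by
    have h1 : H.lap⁻¹ *ᵥ (H.lap *ᵥ w) = w := by
      rw [Matrix.mulVec_mulVec, Matrix.nonsing_inv_mul _ hunit, Matrix.one_mulVec]
    rw [hvec] at h1
    have h2 : (fun a : {v : V // v ≠ H.sink} =>
        (Rs.card : ℚ) * (if (a : V) = x then 1 else 0))
        = (Rs.card : ℚ) • (Pi.single ⟨x, hx⟩ 1 : {v : V // v ≠ H.sink} → ℚ) := by
      funext a
      rw [Pi.smul_apply, Pi.single_apply, smul_eq_mul]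
      congr 1
      by_cases h : (a : V) = x
      · rw [if_pos h, if_pos (Subtype.ext h)]
      · rw [if_neg h, if_neg (fun hh => h (congrArg Subtype.val hh))]
    rw [h2, Matrix.mulVec_smul, Matrix.mulVec_single] at h1
    rw [← h1]
    funext a
    rw [Pi.smul_apply]
    simp only [smul_eq_mul, mul_one]
    simp [lapInv]
  -- finish
  have hLHS : ∑ᶠ η ∈ S, (nfun η : ℚ) = u y := by
    rw [← hSfin.coe_toFinset, finsum_mem_coe_finset]
    refine Finset.sum_congr rfl fun η hη => ?_
    rw [hn η ((hmemRs η).mp hη) (seq _) (hseqleg _) (hseqstab _)]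
  have hwy := congrFun hw_eq ⟨y, hy⟩
  have hcard : (S.ncard : ℚ) = (Rs.card : ℚ) := by
    rw [Set.ncard_eq_toFinset_card S hSfin]
  calc ∑ᶠ η ∈ S, (nfun η : ℚ) = u y := hLHS
    _ = w ⟨y, hy⟩ := rfl
    _ = (Rs.card : ℚ) * H.lapInv ⟨y, hy⟩ ⟨x, hx⟩ := hwy
    _ = H.lapInv ⟨x, hx⟩ ⟨y, hy⟩ * (S.ncard : ℚ) := by
        rw [lapInv_symm, hcard]; ring
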